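/- Let F be a weakly convex sparseness measure, J(x) = Σ_{i=1}^N F(x_i), A ∈ ℝ^{M×N}, and K ≥ 1. Then for every γ ≥ 0 the following are equivalent: (i) J(z_S) ≤ γ·J(z_{S^c}) for every z ∈ ker A and every index set S with #S ≤ K; (ii) ‖z_S‖₁ ≤ γ·‖z_{S^c}‖₁ for every z ∈ ker A and every index set S with #S ≤ K. Consequently the null space constant of J equals that of the ℓ1 norm: γ(J,A,K) = γ(ℓ1,A,K). -/

import Mathlib

open Filter Set

/-- Weak convexity on `[0,∞)` with parameter `ρ`. -/
def WeaklyConvexOnNonneg (F : ℝ → ℝ) (ρ : ℝ) : Prop :=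
  ∀ t₁ t₂ : ℝ, 0 ≤ t₁ → 0 ≤ t₂ → ∀ l : ℝ, 0 ≤ l → l ≤ 1 →
    F (l * t₁ + (1 - l) * t₂) ≤
      l * F t₁ + (1 - l) * F t₂ - ρ * l * (1 - l) * (t₁ - t₂) ^ 2

/-- `F` is a weakly convex sparseness measure with weak-convexity parameter `ρ ≤ 0`. -/
structure IsWCSM (F : ℝ → ℝ) (ρ : ℝ) : Prop where
  zero : F 0 = 0
  even : ∀ t, F (-t) = F t
  nontrivial : ∃ t, F t ≠ 0
  mono : ∀ s t : ℝ, 0 ≤ s → s ≤ t → F s ≤ F t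
  ratio_anti : ∀ s t : ℝ, 0 < s → s ≤ t → F t / t ≤ F s / s
  rho_nonpos : ρ ≤ 0
  wconv : WeaklyConvexOnNonneg F ρ

/-- `α = lim_{t→0⁺} F(t)/t`, finite and positive, with `F(t) ≤ α|t|` for all `t`. -/
def IsAlpha (F : ℝ → ℝ) (α : ℝ) : Prop :=
  0 < α ∧ Tendsto (fun t => F t / t) (nhdsWithin 0 (Set.Ioi 0)) (nhds α) ∧
    ∀ t : ℝ, F t ≤ α * |t|

/-- The generalized gradient set `∂F(t)`; by convention `∂F(0) = {0}`. -/
noncomputable def genGrad (F : ℝ → ℝ) (t : ℝ) : Set ℝ :=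
  if t = 0 then {0}
  else {f : ℝ | ∀ ν : ℝ,
    ν * f ≤ Filter.limsup (fun θ => (F (t + θ * ν) - F t) / θ) (nhdsWithin 0 (Set.Ioi 0))}

/-- Euclidean (`ℓ2`) norm of a vector. -/
noncomputable def l2 {n : ℕ} (x : Fin n → ℝ) : ℝ := Real.sqrt (∑ i, (x i) ^ 2)

/-- `ℓ1` norm of a vector. -/
def l1 {n : ℕ} (x : Fin n → ℝ) : ℝ := ∑ i, |x i|

/-- `ℓ0` "norm": number of nonzero entries. -/
noncomputable def l0 {n : ℕ} (x : Fin n → ℝ) : ℕ :=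
  (Finset.univ.filter (fun i => x i ≠ 0)).card

/-- `z_S`: the vector equal to `z` on `S` and zero elsewhere. -/
def restr {n : ℕ} (x : Fin n → ℝ) (S : Finset (Fin n)) : Fin n → ℝ :=
  fun i => if i ∈ S then x i else 0

/-- `γ` is a null-space-constant bound for `(J, A, K)`. -/
def NSCBound {M N : ℕ} (J : (Fin N → ℝ) → ℝ) (A : Matrix (Fin M) (Fin N) ℝ)
    (K : ℕ) (γ : ℝ) : Prop :=
  ∀ z : Fin N → ℝ, A.mulVec z = 0 → ∀ S : Finset (Fin N), S.card ≤ K →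
    J (restr z S) ≤ γ * J (restr z Sᶜ)

/-- Spectral norm (`ℓ2`-operator norm) of a matrix. -/
noncomputable def opNorm2 {m n : ℕ} (A : Matrix (Fin m) (Fin n) ℝ) : ℝ :=
  sSup {c : ℝ | ∃ v : Fin n → ℝ, l2 v ≤ 1 ∧ c = l2 (A.mulVec v)}

section Aux

variable {F : ℝ → ℝ} {ρ : ℝ}

lemma F_abs (hF : IsWCSM F ρ) (t : ℝ) : F |t| = F t := by
  rcases abs_cases t with ⟨h, _⟩ | ⟨h, _⟩
  · rw [h]
  · rw [h, hF.even]

lemma F_nonneg (hF : IsWCSM F ρ) (t : ℝ) : 0 ≤ F t := by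
  rw [← F_abs hF t]
  have := hF.mono 0 |t| le_rfl (abs_nonneg t)
  rwa [hF.zero] at this

lemma sum_restr {N : ℕ} (G : ℝ → ℝ) (hG : G 0 = 0) (x : Fin N → ℝ) (S : Finset (Fin N)) :
    ∑ i, G (restr x S i) = ∑ i ∈ S, G (x i) := by
  unfold restr
  simp only [apply_ite G, hG]
  rw [Finset.sum_ite_mem, Finset.univ_inter]

lemma l1_restr {N : ℕ} (x : Fin N → ℝ) (S : Finset (Fin N)) :
    l1 (restr x S) = ∑ i ∈ S, |x i| := by
  simpa [l1] using sum_restr (fun t => |t|) abs_zero x S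

/-- `α`: the supremum of `F t / t` over `t > 0`. -/
noncomputable def alphaF (F : ℝ → ℝ) : ℝ := sSup ((fun t => F t / t) '' Set.Ioi 0)

lemma ratio_bdd (hF : IsWCSM F ρ) {t : ℝ} (ht : 0 < t) : F t / t ≤ F 1 - ρ := by
  rcases le_or_gt t 1 with h1 | h1
  · have hw := hF.wconv 1 0 zero_le_one le_rfl t ht.le h1
    simp only [mul_one, mul_zero, hF.zero, add_zero, sub_zero, one_pow] at hw
    rw [div_le_iff₀ ht]
    have hρ : 0 ≤ -ρ := neg_nonneg.mpr hF.rho_nonpos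
    nlinarith [mul_nonneg hρ (mul_self_nonneg t)]
  · have := hF.ratio_anti 1 t one_pos h1.le
    simp only [div_one] at this
    linarith [hF.rho_nonpos]

lemma ratio_bddAbove (hF : IsWCSM F ρ) : BddAbove ((fun t => F t / t) '' Set.Ioi 0) := by
  refine ⟨F 1 - ρ, ?_⟩
  rintro r ⟨t, ht, rfl⟩
  exact ratio_bdd hF ht

lemma le_alphaF (hF : IsWCSM F ρ) {t : ℝ} (ht : 0 < t) : F t / t ≤ alphaF F :=
  le_csSup (ratio_bddAbove hF) ⟨t, ht, rfl⟩

lemma alphaF_pos (hF : IsWCSM F ρ) : 0 < alphaF F := by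
  obtain ⟨t, htne⟩ := hF.nontrivial
  have ht0 : t ≠ 0 := by rintro rfl; exact htne hF.zero
  have habs : 0 < |t| := abs_pos.mpr ht0
  have hFt : 0 < F |t| := by
    rcases lt_or_eq_of_le (F_nonneg hF |t|) with h | h
    · exact h
    · exact absurd (F_abs hF t ▸ h.symm) htne
  exact lt_of_lt_of_le (div_pos hFt habs) (le_alphaF hF habs)

lemma alphaF_approx (hF : IsWCSM F ρ) {ε : ℝ} (hε : 0 < ε) :
    ∃ δ > 0, ∀ u, 0 < u → u ≤ δ → alphaF F - ε ≤ F u / u := by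
  have hne : ((fun t => F t / t) '' Set.Ioi 0).Nonempty := ⟨F 1 / 1, 1, Set.mem_Ioi.mpr one_pos, rfl⟩
  obtain ⟨r, ⟨t₀, ht₀, rfl⟩, hr⟩ := exists_lt_of_lt_csSup hne (by linarith : alphaF F - ε < alphaF F)
  refine ⟨t₀, ht₀, fun u hu hut => ?_⟩
  exact le_trans hr.le (hF.ratio_anti u t₀ hu hut)

/-- A set of `k` indices carrying the `k` largest values of `w`. -/
lemma exists_topset {N : ℕ} (w : Fin N → ℝ) (k : ℕ) (hk : k ≤ N) :
    ∃ T : Finset (Fin N), T.card = k ∧ ∀ i ∈ T, ∀ j ∉ T, w j ≤ w i := by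
  induction k with
  | zero => exact ⟨∅, rfl, by simp⟩
  | succ k ih =>
    obtain ⟨T, hcard, htop⟩ := ih (Nat.le_of_succ_le hk)
    have hTc : Tᶜ.Nonempty := by
      rw [← Finset.card_pos, Finset.card_compl, hcard, Fintype.card_fin]
      omega
    obtain ⟨j, hjc, hjmax⟩ := Tᶜ.exists_max_image w hTc
    have hjT : j ∉ T := Finset.mem_compl.mp hjc
    refine ⟨insert j T, by rw [Finset.card_insert_of_notMem hjT, hcard], ?_⟩
    intro i hi j' hj'
    have hj'T : j' ∉ T := fun h => hj' (Finset.mem_insert_of_mem h)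
    rcases Finset.mem_insert.mp hi with rfl | hiT
    · exact hjmax j' (Finset.mem_compl.mpr hj'T)
    · exact htop i hiT j' hj'T

lemma sum_compare {N : ℕ} (g : Fin N → ℝ) (P Q : Finset (Fin N))
    (hcard : P.card = Q.card)
    (h : ∀ i ∈ P \ Q, ∀ j ∈ Q \ P, g i ≤ g j) :
    ∑ i ∈ P, g i ≤ ∑ i ∈ Q, g i := by
  rw [← Finset.sum_inter_add_sum_sdiff P Q g, ← Finset.sum_inter_add_sum_sdiff Q P g,
    Finset.inter_comm Q P]
  have hcd : (P \ Q).card = (Q \ P).card := by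
    have h1 := Finset.card_inter_add_card_sdiff P Q
    have h2 := Finset.card_inter_add_card_sdiff Q P
    rw [Finset.inter_comm Q P] at h2
    omega
  have hsd : ∑ i ∈ P \ Q, g i ≤ ∑ i ∈ Q \ P, g i := by
    rcases (Q \ P).eq_empty_or_nonempty with he | hne
    · have : (P \ Q) = ∅ := Finset.card_eq_zero.mp (by rw [hcd, he, Finset.card_empty])
      rw [this, he]
    · obtain ⟨b, hb, hbmin⟩ := (Q \ P).exists_min_image g hne
      calc ∑ i ∈ P \ Q, g i ≤ (P \ Q).card • g b :=
            Finset.sum_le_card_nsmul _ _ _ (fun i hi => h i hi b hb)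
        _ = (Q \ P).card • g b := by rw [hcd]
        _ ≤ ∑ i ∈ Q \ P, g i := Finset.card_nsmul_le_sum _ _ _ hbmin
  linarith

end Aux
section Main

variable {F : ℝ → ℝ} {ρ : ℝ}

lemma dir1 {M N : ℕ} (hF : IsWCSM F ρ) (A : Matrix (Fin M) (Fin N) ℝ) (K : ℕ)
    {γ : ℝ} (hγ : 0 ≤ γ) (h : NSCBound (fun x => ∑ i, F (x i)) A K γ) :
    NSCBound (fun x => l1 x) A K γ := by
  intro z hz S hS
  show l1 (restr z S) ≤ γ * l1 (restr z Sᶜ)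
  rw [l1_restr, l1_restr]
  set a := ∑ i ∈ S, |z i| with ha
  set b := ∑ i ∈ Sᶜ, |z i| with hb
  have ha0 : 0 ≤ a := Finset.sum_nonneg fun i _ => abs_nonneg _
  have hb0 : 0 ≤ b := Finset.sum_nonneg fun i _ => abs_nonneg _
  set α := alphaF F with hα
  have hαpos : 0 < α := alphaF_pos hF
  have key : ∀ ε : ℝ, 0 < ε → (α - ε) * a ≤ γ * (α * b) := by
    intro ε hε
    obtain ⟨δ, hδ, hδp⟩ := alphaF_approx hF hε
    set m := ∑ i, |z i| with hm
    have hm0 : 0 ≤ m := Finset.sum_nonneg fun i _ => abs_nonneg _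
    have hzi : ∀ i, |z i| ≤ m := fun i =>
      Finset.single_le_sum (f := fun i => |z i|) (fun j _ => abs_nonneg _) (Finset.mem_univ i)
    set t := δ / (m + 1) with ht
    have htpos : 0 < t := div_pos hδ (by linarith)
    have hbound : ∀ i : Fin N,
        (α - ε) * (t * |z i|) ≤ F (t * z i) ∧ F (t * z i) ≤ α * (t * |z i|) := by
      intro i
      have habs : F (t * z i) = F (t * |z i|) := by
        rw [← F_abs hF (t * z i), abs_mul, abs_of_pos htpos]
      rcases eq_or_ne (z i) 0 with h0 | h0
      · simp [h0, hF.zero]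
      · have hu : 0 < t * |z i| := mul_pos htpos (abs_pos.mpr h0)
        have huδ : t * |z i| ≤ δ := by
          have h1 : t * |z i| ≤ t * (m + 1) := by
            apply mul_le_mul_of_nonneg_left _ htpos.le
            linarith [hzi i]
          have h2 : t * (m + 1) = δ := div_mul_cancel₀ δ (by linarith)
          linarith
        have h1 := hδp _ hu huδ
        have h2 := le_alphaF hF hu
        constructor
        · rw [habs]
          calc (α - ε) * (t * |z i|) ≤ (F (t * |z i|) / (t * |z i|)) * (t * |z i|) :=
                mul_le_mul_of_nonneg_right h1 hu.le
            _ = F (t * |z i|) := div_mul_cancel₀ _ hu.ne'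
        · rw [habs]
          calc F (t * |z i|) = (F (t * |z i|) / (t * |z i|)) * (t * |z i|) :=
                (div_mul_cancel₀ _ hu.ne').symm
            _ ≤ α * (t * |z i|) := mul_le_mul_of_nonneg_right h2 hu.le
    have hker : A.mulVec (t • z) = 0 := by rw [Matrix.mulVec_smul, hz, smul_zero]
    have hJ := h (t • z) hker S hS
    simp only [sum_restr F hF.zero, Pi.smul_apply, smul_eq_mul] at hJ
    have hL : ∑ i ∈ S, (α - ε) * (t * |z i|) ≤ ∑ i ∈ S, F (t * z i) :=
      Finset.sum_le_sum fun i _ => (hbound i).1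
    have hR : ∑ i ∈ Sᶜ, F (t * z i) ≤ ∑ i ∈ Sᶜ, α * (t * |z i|) :=
      Finset.sum_le_sum fun i _ => (hbound i).2
    have e1 : ∑ i ∈ S, (α - ε) * (t * |z i|) = ((α - ε) * t) * a := by
      rw [ha, Finset.mul_sum]
      exact Finset.sum_congr rfl fun i _ => (mul_assoc _ _ _).symm
    have e2 : ∑ i ∈ Sᶜ, α * (t * |z i|) = (α * t) * b := by
      rw [hb, Finset.mul_sum]
      exact Finset.sum_congr rfl fun i _ => (mul_assoc _ _ _).symm
    have chain : ((α - ε) * t) * a ≤ γ * ((α * t) * b) := by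
      rw [← e1, ← e2]
      calc ∑ i ∈ S, (α - ε) * (t * |z i|) ≤ ∑ i ∈ S, F (t * z i) := hL
        _ ≤ γ * ∑ i ∈ Sᶜ, F (t * z i) := hJ
        _ ≤ γ * ∑ i ∈ Sᶜ, α * (t * |z i|) := mul_le_mul_of_nonneg_left hR hγ
    have chain' : ((α - ε) * a) * t ≤ (γ * (α * b)) * t := by nlinarith [chain]
    exact le_of_mul_le_mul_right chain' htpos
  have hfin : α * a ≤ α * (γ * b) := by
    apply le_of_forall_pos_le_add
    intro ε' hε'
    rcases ha0.eq_or_lt with h0 | hapos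
    · have : α * a = 0 := by rw [← h0, mul_zero]
      have hrhs : 0 ≤ α * (γ * b) := mul_nonneg hαpos.le (mul_nonneg hγ hb0)
      linarith
    · have := key (ε' / a) (div_pos hε' hapos)
      have hea : (ε' / a) * a = ε' := div_mul_cancel₀ _ hapos.ne'
      nlinarith [this]
  exact le_of_mul_le_mul_left (by nlinarith [hfin]) hαpos

lemma dir2 {M N : ℕ} (hF : IsWCSM F ρ) (A : Matrix (Fin M) (Fin N) ℝ) (K : ℕ)
    {γ : ℝ} (hγ : 0 ≤ γ) (h : NSCBound (fun x => l1 x) A K γ) :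
    NSCBound (fun x => ∑ i, F (x i)) A K γ := by
  intro z hz S hS
  show ∑ i, F (restr z S i) ≤ γ * ∑ i, F (restr z Sᶜ i)
  rw [sum_restr F hF.zero, sum_restr F hF.zero]
  obtain ⟨T, hTcard, hTtop⟩ := exists_topset (fun i => |z i|) S.card
    (le_trans (Finset.card_le_univ S) (by simp))
  have hFmono : ∀ i j : Fin N, |z i| ≤ |z j| → F (z i) ≤ F (z j) := by
    intro i j hij
    rw [← F_abs hF (z i), ← F_abs hF (z j)]
    exact hF.mono _ _ (abs_nonneg _) hij
  have hA : ∑ i ∈ S, F (z i) ≤ ∑ i ∈ T, F (z i) := by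
    apply sum_compare _ _ _ (hTcard.symm)
    intro i hi j hj
    exact hFmono i j (hTtop j (Finset.mem_sdiff.mp hj).1 i (Finset.mem_sdiff.mp hi).2)
  have hB : ∑ j ∈ Tᶜ, F (z j) ≤ ∑ j ∈ Sᶜ, F (z j) := by
    apply sum_compare _ _ _ (by rw [Finset.card_compl, Finset.card_compl, hTcard])
    intro i hi j hj
    obtain ⟨hi1, hi2⟩ := Finset.mem_sdiff.mp hi
    obtain ⟨hj1, hj2⟩ := Finset.mem_sdiff.mp hj
    have hjT : j ∈ T := by simpa using hj2
    have hiT : i ∉ T := Finset.mem_compl.mp hi1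
    exact hFmono i j (hTtop j hjT i hiT)
  have hl1 : ∑ i ∈ T, |z i| ≤ γ * ∑ j ∈ Tᶜ, |z j| := by
    have := h z hz T (hTcard ▸ hS)
    simpa only [l1_restr] using this
  have hMid : ∑ i ∈ T, F (z i) ≤ γ * ∑ j ∈ Tᶜ, F (z j) := by
    by_cases hall : ∀ i ∈ T, z i = 0
    · have hz0 : ∑ i ∈ T, F (z i) = 0 :=
        Finset.sum_eq_zero fun i hi => by rw [hall i hi, hF.zero]
      rw [hz0]
      exact mul_nonneg hγ (Finset.sum_nonneg fun j _ => F_nonneg hF _)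
    · push_neg at hall
      obtain ⟨i₁, hi₁T, hi₁⟩ := hall
      have hT' : (T.filter (fun i => z i ≠ 0)).Nonempty :=
        ⟨i₁, Finset.mem_filter.mpr ⟨hi₁T, hi₁⟩⟩
      obtain ⟨i₀, hi₀, hi₀min⟩ :=
        (T.filter (fun i => z i ≠ 0)).exists_min_image (fun i => |z i|) hT'
      obtain ⟨hi₀T, hi₀ne⟩ := Finset.mem_filter.mp hi₀
      set m := |z i₀| with hm
      have hmpos : 0 < m := abs_pos.mpr hi₀ne
      set c := F m / m with hc
      have hc0 : 0 ≤ c := div_nonneg (F_nonneg hF m) hmpos.le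
      have hclaim1 : ∀ i ∈ T, F (z i) ≤ c * |z i| := by
        intro i hiT
        rcases eq_or_ne (z i) 0 with h0 | h0
        · simp [h0, hF.zero]
        · have hmem : i ∈ T.filter (fun i => z i ≠ 0) := Finset.mem_filter.mpr ⟨hiT, h0⟩
          have hmi : m ≤ |z i| := hi₀min i hmem
          have hrat := hF.ratio_anti m |z i| hmpos hmi
          rw [← F_abs hF (z i)]
          calc F |z i| = (F |z i| / |z i|) * |z i| :=
                (div_mul_cancel₀ _ (abs_ne_zero.mpr h0)).symm
            _ ≤ c * |z i| := mul_le_mul_of_nonneg_right hrat (abs_nonneg _)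
      have hclaim2 : ∀ j ∈ Tᶜ, c * |z j| ≤ F (z j) := by
        intro j hjc
        rcases eq_or_ne (z j) 0 with h0 | h0
        · simp [h0, hF.zero]
        · have hjm : |z j| ≤ m := hTtop i₀ hi₀T j (Finset.mem_compl.mp hjc)
          have hrat := hF.ratio_anti |z j| m (abs_pos.mpr h0) hjm
          rw [← F_abs hF (z j)]
          calc c * |z j| ≤ (F |z j| / |z j|) * |z j| :=
                mul_le_mul_of_nonneg_right hrat (abs_nonneg _)
            _ = F |z j| := div_mul_cancel₀ _ (abs_ne_zero.mpr h0)
      calc ∑ i ∈ T, F (z i) ≤ ∑ i ∈ T, c * |z i| := Finset.sum_le_sum hclaim1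
        _ = c * ∑ i ∈ T, |z i| := (Finset.mul_sum _ _ _).symm
        _ ≤ c * (γ * ∑ j ∈ Tᶜ, |z j|) := mul_le_mul_of_nonneg_left hl1 hc0
        _ = γ * ∑ j ∈ Tᶜ, c * |z j| := by rw [← Finset.mul_sum]; ring
        _ ≤ γ * ∑ j ∈ Tᶜ, F (z j) :=
            mul_le_mul_of_nonneg_left (Finset.sum_le_sum hclaim2) hγ
  exact le_trans hA (le_trans hMid (mul_le_mul_of_nonneg_left hB hγ))

end Main
/-- for a weakly convex sparseness measure `F`, a constant `γ ≥ 0` is a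
null-space-constant bound for `J(x) = Σᵢ F(xᵢ)` iff it is one for the `ℓ1` norm;
consequently `γ(J, A, K) = γ(ℓ1, A, K)`. -/
theorem stmt3 {M N : ℕ} (hMN : M < N) (F : ℝ → ℝ) (ρ : ℝ) (hF : IsWCSM F ρ)
    (A : Matrix (Fin M) (Fin N) ℝ) (K : ℕ) (hK : 1 ≤ K) :
    (∀ γ : ℝ, 0 ≤ γ →
      (NSCBound (fun x => ∑ i, F (x i)) A K γ ↔ NSCBound (fun x => l1 x) A K γ)) ∧
    sInf {γ : ℝ | 0 ≤ γ ∧ NSCBound (fun x => ∑ i, F (x i)) A K γ} =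
      sInf {γ : ℝ | 0 ≤ γ ∧ NSCBound (fun x => l1 x) A K γ} := by
  have hiff : ∀ γ : ℝ, 0 ≤ γ →
      (NSCBound (fun x => ∑ i, F (x i)) A K γ ↔ NSCBound (fun x => l1 x) A K γ) :=
    fun γ hγ => ⟨fun h => dir1 hF A K hγ h, fun h => dir2 hF A K hγ h⟩
  refine ⟨hiff, ?_⟩
  have hset : {γ : ℝ | 0 ≤ γ ∧ NSCBound (fun x => ∑ i, F (x i)) A K γ} =
      {γ : ℝ | 0 ≤ γ ∧ NSCBound (fun x => l1 x) A K γ} :=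
    Set.ext fun γ => and_congr_right fun hγ => hiff γ hγ
  rw [hset]
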